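/- Let K be an algebraically closed field of characteristic zero, complete with respect to a nontrivial non-Archimedean absolute value, with ‖(n : K)‖ = 1 for every nonzero integer n. Let {(f_λ; c_1(λ),…,c_{d−1}(λ))} be a critically marked analytic family of monic centered degree-d polynomials (d ≥ 2) over the open ball Λ = {λ ∈ K : ‖λ − λ_0‖ < r}, and assume the base radius R_{f_λ} is the same for all λ ∈ Λ. Then there exists s_0 < r such that for every real s with s_0 < s < r that lies in the value group ‖K^×‖ there exists λ_1 ∈ K with ‖λ_1 − λ_0‖ = s such that the open ball Λ′ = {λ : ‖λ − λ_1‖ < s} (a maximal open disk contained in Λ ∖ {λ_0}) satisfies: (1) every marked critical point c_j is passive in Λ′; and (2) for every index j such that c_j is active in Λ, the point c_j(λ′) escapes to infinity under f_{λ′} for every λ′ ∈ Λ′. -/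

import Mathlib

open Polynomial Filter

/-- The monic centered polynomial `z^d + a_{d-2} z^{d-2} + ⋯ + a_0`. -/
noncomputable def MCpoly {K : Type*} [Field K] (d : ℕ) (a : Fin (d - 1) → K) : Polynomial K :=
  X ^ d + ∑ i : Fin (d - 1), C (a i) * X ^ (i : ℕ)

/-- `z` escapes to infinity under `f`: `‖f^[n] z‖ → ∞`. -/
def Escapes {K : Type*} [NormedField K] (f : K → K) (z : K) : Prop :=
  Tendsto (fun n : ℕ => ‖f^[n] z‖) atTop atTop

/-- The polynomial map `f_λ` of a family with coefficient functions `a`. -/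
noncomputable def famF {K : Type*} [Field K] (d : ℕ) (a : Fin (d - 1) → K → K)
    (lam : K) : K → K :=
  fun z => (MCpoly d fun i => a i lam).eval z

/-- `h` is given by a power series centered at `lam0` converging at every point of the
open ball of radius `rad`. -/
def PowerSeriesOnBall {K : Type*} [NormedField K] (h : K → K) (lam0 : K) (rad : ℝ) :
    Prop :=
  ∃ b : ℕ → K, ∀ lam : K, ‖lam - lam0‖ < rad →
    HasSum (fun n : ℕ => b n * (lam - lam0) ^ n) (h lam)

/-- A critically marked analytic family of monic centered degree-`d` polynomials over the
open ball `{‖λ − lam0‖ < rad}`: the coefficients `a i` and marked critical points `c j`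
are analytic, and `f_λ′(z) = d·(z − c_1(λ))⋯(z − c_{d−1}(λ))`. -/
def IsMarkedFamily {K : Type*} [NormedField K] (d : ℕ) (lam0 : K) (rad : ℝ)
    (a c : Fin (d - 1) → K → K) : Prop :=
  (∀ i, PowerSeriesOnBall (a i) lam0 rad) ∧
  (∀ j, PowerSeriesOnBall (c j) lam0 rad) ∧
  (∀ lam : K, ‖lam - lam0‖ < rad →
    derivative (MCpoly d fun i => a i lam) =
      C (d : K) * ∏ j : Fin (d - 1), (X - C (c j lam)))

/-- The marked critical point `cj` is passive on the ball `{‖λ − lam0‖ < rad}`: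
either it escapes for every parameter in the ball, or for none. -/
def PassiveOn {K : Type*} [NormedField K] (d : ℕ) (a : Fin (d - 1) → K → K)
    (cj : K → K) (lam0 : K) (rad : ℝ) : Prop :=
  (∀ lam : K, ‖lam - lam0‖ < rad → Escapes (famF d a lam) (cj lam)) ∨
  (∀ lam : K, ‖lam - lam0‖ < rad → ¬ Escapes (famF d a lam) (cj lam))

/-- The base radius `R_f = max{1, ‖a_i‖^{1/(d−i)}}` of a monic centered polynomial. -/
noncomputable def baseRadius {K : Type*} [NormedField K] (d : ℕ) (a : Fin (d - 1) → K) :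
    ℝ :=
  max 1 (⨆ i : Fin (d - 1), ‖a i‖ ^ (((d : ℝ) - ((i : ℕ) : ℝ))⁻¹))


section Aux

variable {K : Type*} [NontriviallyNormedField K] [IsUltrametricDist K] [CompleteSpace K]
variable {lam0 : K} {r : ℝ}
set_option linter.unusedSectionVars false
set_option linter.unusedVariables false

lemma summable_mul_prod_of_summable {f g : ℕ → K} (hf : Summable f) (hg : Summable g) :
    Summable fun p : ℕ × ℕ => f p.1 * g p.2 := by
  -- bound
  obtain ⟨Cf, hCf⟩ := (hf.tendsto_atTop_zero.norm.bddAbove_range)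
  obtain ⟨Cg, hCg⟩ := (hg.tendsto_atTop_zero.norm.bddAbove_range)
  set C : ℝ := max 1 (max Cf Cg) with hC
  have hC1 : (1:ℝ) ≤ C := le_max_left _ _
  have hC0 : (0:ℝ) < C := lt_of_lt_of_le one_pos hC1
  have hfC : ∀ i, ‖f i‖ ≤ C := fun i =>
    le_trans (hCf (Set.mem_range_self i)) (le_trans (le_max_left _ _) (le_max_right _ _))
  have hgC : ∀ i, ‖g i‖ ≤ C := fun i =>
    le_trans (hCg (Set.mem_range_self i)) (le_trans (le_max_right _ _) (le_max_right _ _))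
  apply NonarchimedeanAddGroup.summable_of_tendsto_cofinite_zero
  rw [Metric.tendsto_nhds]
  intro ε hε
  rw [Filter.eventually_cofinite]
  have hεC : 0 < ε / C := div_pos hε hC0
  have h1 : {i : ℕ | ¬ ‖f i‖ < ε / C}.Finite := by
    have := hf.tendsto_cofinite_zero
    rw [Metric.tendsto_nhds] at this
    have := this (ε / C) hεC
    rw [Filter.eventually_cofinite] at this
    simpa [dist_zero_right] using this
  have h2 : {i : ℕ | ¬ ‖g i‖ < ε / C}.Finite := by
    have := hg.tendsto_cofinite_zero
    rw [Metric.tendsto_nhds] at this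
    have := this (ε / C) hεC
    rw [Filter.eventually_cofinite] at this
    simpa [dist_zero_right] using this
  refine Set.Finite.subset (h1.prod h2) ?_
  rintro ⟨i, j⟩ hij
  simp only [Set.mem_setOf_eq, dist_zero_right, not_lt] at hij
  constructor
  · simp only [Set.mem_setOf_eq, not_lt]
    by_contra hcon
    push_neg at hcon
    have : ‖f i * g j‖ < ε := by
      rw [norm_mul]
      calc ‖f i‖ * ‖g j‖ ≤ ‖f i‖ * C := by
            exact mul_le_mul_of_nonneg_left (hgC j) (norm_nonneg _)
        _ < (ε / C) * C := by
            exact mul_lt_mul_of_pos_right hcon hC0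
        _ = ε := div_mul_cancel₀ ε (ne_of_gt hC0)
    exact absurd this (not_lt.mpr hij)
  · simp only [Set.mem_setOf_eq, not_lt]
    by_contra hcon
    push_neg at hcon
    have : ‖f i * g j‖ < ε := by
      rw [norm_mul]
      calc ‖f i‖ * ‖g j‖ ≤ C * ‖g j‖ := mul_le_mul_of_nonneg_right (hfC i) (norm_nonneg _)
        _ < C * (ε / C) := mul_lt_mul_of_pos_left hcon hC0
        _ = ε := mul_div_cancel₀ ε (ne_of_gt hC0)
    exact absurd this (not_lt.mpr hij)

lemma hasSum_cauchy_product {f g : ℕ → K} {A B : K} (hf : HasSum f A) (hg : HasSum g B) :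
    HasSum (fun n => ∑ kl ∈ Finset.HasAntidiagonal.antidiagonal n, f kl.1 * g kl.2) (A * B) := by
  have hfg : Summable fun p : ℕ × ℕ => f p.1 * g p.2 :=
    summable_mul_prod_of_summable ⟨A, hf⟩ ⟨B, hg⟩
  have key : HasSum (fun p : ℕ × ℕ => f p.1 * g p.2) (A * B) := hf.mul hg hfg
  have he : HasSum ((fun p : ℕ × ℕ => f p.1 * g p.2) ∘ Finset.HasAntidiagonal.sigmaAntidiagonalEquivProd)
      (A * B) := (Equiv.hasSum_iff _).mpr key
  have := he.sigma (fun n => hasSum_fintype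
    (fun kl : Finset.HasAntidiagonal.antidiagonal n =>
      ((fun p : ℕ × ℕ => f p.1 * g p.2) ∘ Finset.HasAntidiagonal.sigmaAntidiagonalEquivProd) ⟨n, kl⟩))
  convert this using 2 with n
  rw [← Finset.sum_finset_coe]
  rfl

lemma PowerSeriesOnBall.mul {h1 h2 : K → K} (H1 : PowerSeriesOnBall h1 lam0 r)
    (H2 : PowerSeriesOnBall h2 lam0 r) :
    PowerSeriesOnBall (fun z => h1 z * h2 z) lam0 r := by
  obtain ⟨b, hb⟩ := H1
  obtain ⟨b', hb'⟩ := H2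
  refine ⟨fun n => ∑ kl ∈ Finset.HasAntidiagonal.antidiagonal n, b kl.1 * b' kl.2, fun lam hlam => ?_⟩
  have := hasSum_cauchy_product (hb lam hlam) (hb' lam hlam)
  convert this using 2 with n
  rw [Finset.sum_mul]
  refine Finset.sum_congr rfl fun kl hkl => ?_
  rw [Finset.HasAntidiagonal.mem_antidiagonal] at hkl
  rw [← hkl, pow_add]; ring

lemma famF_apply {d : ℕ} (a : Fin (d - 1) → K → K) (lam z : K) :
    famF d a lam z = z ^ d + ∑ i : Fin (d - 1), a i lam * z ^ (i : ℕ) := by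
  simp [famF, MCpoly, eval_finset_sum]

lemma PowerSeriesOnBall.const (k : K) : PowerSeriesOnBall (fun _ => k) lam0 r := by
  refine ⟨fun n => if n = 0 then k else 0, fun lam _ => ?_⟩
  have : (fun n : ℕ => (if n = 0 then k else 0) * (lam - lam0) ^ n) =
      fun n : ℕ => if n = 0 then k else 0 := by
    funext n
    by_cases h : n = 0 <;> simp [h]
  rw [this]
  exact hasSum_ite_eq 0 k

lemma PowerSeriesOnBall.add {h1 h2 : K → K} (H1 : PowerSeriesOnBall h1 lam0 r)
    (H2 : PowerSeriesOnBall h2 lam0 r) :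
    PowerSeriesOnBall (fun z => h1 z + h2 z) lam0 r := by
  obtain ⟨b, hb⟩ := H1
  obtain ⟨b', hb'⟩ := H2
  refine ⟨fun n => b n + b' n, fun lam hlam => ?_⟩
  have := (hb lam hlam).add (hb' lam hlam)
  convert this using 2 with n
  ring

lemma PowerSeriesOnBall.pow {h1 : K → K} (H1 : PowerSeriesOnBall h1 lam0 r) (n : ℕ) :
    PowerSeriesOnBall (fun z => h1 z ^ n) lam0 r := by
  induction n with
  | zero => simpa using PowerSeriesOnBall.const (lam0 := lam0) (r := r) 1
  | succ n ih =>
      have := ih.mul H1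
      simpa [pow_succ] using this

lemma PowerSeriesOnBall.finsetSum {ι : Type*} (S : Finset ι) (F : ι → K → K)
    (h : ∀ i ∈ S, PowerSeriesOnBall (F i) lam0 r) :
    PowerSeriesOnBall (fun z => ∑ i ∈ S, F i z) lam0 r := by
  classical
  induction S using Finset.induction with
  | empty => simpa using PowerSeriesOnBall.const (lam0 := lam0) (r := r) 0
  | insert i S hni ih =>
      rw [show (fun z => ∑ j ∈ insert i S, F j z) = fun z => F i z + ∑ j ∈ S, F j z by
        funext z; rw [Finset.sum_insert hni]]
      exact (h i (Finset.mem_insert_self i S)).add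
        (ih fun j hj => h j (Finset.mem_insert_of_mem hj))

lemma gSeq_series {d : ℕ} {a : Fin (d - 1) → K → K} {cj : K → K}
    (ha : ∀ i, PowerSeriesOnBall (a i) lam0 r) (hc : PowerSeriesOnBall cj lam0 r) (n : ℕ) :
    PowerSeriesOnBall (fun lam => (famF d a lam)^[n] (cj lam)) lam0 r := by
  induction n with
  | zero => simpa using hc
  | succ n ih =>
      have heq : (fun lam => (famF d a lam)^[n + 1] (cj lam)) =
          fun lam => ((famF d a lam)^[n] (cj lam)) ^ d +
            ∑ i : Fin (d - 1), a i lam * ((famF d a lam)^[n] (cj lam)) ^ (i : ℕ) := by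
        funext lam
        rw [Function.iterate_succ_apply', famF_apply]
      rw [heq]
      exact (ih.pow d).add (PowerSeriesOnBall.finsetSum Finset.univ _
        (fun i _ => (ha i).mul (ih.pow (i : ℕ))))

lemma norm_add_eq_left {x y : K} (h : ‖y‖ < ‖x‖) : ‖x + y‖ = ‖x‖ := by
  rw [IsUltrametricDist.norm_add_eq_max_of_norm_ne_norm h.ne', max_eq_left h.le]

lemma one_le_baseRadius {d : ℕ} (a : Fin (d - 1) → K) : 1 ≤ baseRadius d a :=
  le_max_left _ _

lemma norm_coeff_le {d : ℕ} (hd : 2 ≤ d) (a : Fin (d - 1) → K) (i : Fin (d - 1)) :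
    ‖a i‖ ≤ baseRadius d a ^ (d - (i : ℕ)) := by
  have hifin : (i : ℕ) < d - 1 := i.isLt
  have hmpos : 0 < d - (i : ℕ) := by omega
  have hsup : ‖a i‖ ^ (((d : ℝ) - ((i : ℕ) : ℝ))⁻¹) ≤ baseRadius d a := by
    refine le_trans ?_ (le_max_right _ _)
    exact le_ciSup (f := fun i : Fin (d - 1) => ‖a i‖ ^ (((d : ℝ) - ((i : ℕ) : ℝ))⁻¹))
      (Set.Finite.bddAbove (Set.finite_range _)) i
  have hcast : ((d : ℝ) - ((i : ℕ) : ℝ)) = ((d - (i : ℕ) : ℕ) : ℝ) := by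
    push_cast [Nat.cast_sub (by omega : (i:ℕ) ≤ d)]
    ring
  have hnn : (0:ℝ) ≤ ‖a i‖ := norm_nonneg _
  have key : (‖a i‖ ^ (((d : ℝ) - ((i : ℕ) : ℝ))⁻¹)) ^ (d - (i : ℕ)) = ‖a i‖ := by
    rw [hcast, ← Real.rpow_natCast (‖a i‖ ^ (((d - (i:ℕ) : ℕ) : ℝ))⁻¹) (d - (i:ℕ)),
      ← Real.rpow_mul hnn, inv_mul_cancel₀ (by positivity : ((d - (i:ℕ) : ℕ) : ℝ) ≠ 0),
      Real.rpow_one]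
  calc ‖a i‖ = (‖a i‖ ^ (((d : ℝ) - ((i : ℕ) : ℝ))⁻¹)) ^ (d - (i : ℕ)) := key.symm
    _ ≤ baseRadius d a ^ (d - (i : ℕ)) :=
        pow_le_pow_left₀ (Real.rpow_nonneg hnn _) hsup _

lemma norm_famF_eval {d : ℕ} (hd : 2 ≤ d) (a : Fin (d - 1) → K) (z : K)
    (hz : baseRadius d a < ‖z‖) : ‖(MCpoly d a).eval z‖ = ‖z‖ ^ d := by
  set R := baseRadius d a with hR
  have hR1 : (1:ℝ) ≤ R := one_le_baseRadius a
  have hz1 : (1:ℝ) < ‖z‖ := lt_of_le_of_lt hR1 hz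
  have hz0 : (0:ℝ) < ‖z‖ := lt_trans one_pos hz1
  have heval : (MCpoly d a).eval z = z ^ d + ∑ i : Fin (d - 1), a i * z ^ (i : ℕ) := by
    simp [MCpoly, eval_finset_sum]
  rw [heval]
  have hbound : ∀ i : Fin (d - 1), ‖a i * z ^ (i : ℕ)‖ ≤ R * ‖z‖ ^ (d - 1) := by
    intro i
    have hi2 : (i : ℕ) + 2 ≤ d := by have := i.isLt; omega
    have h1 : ‖a i * z ^ (i : ℕ)‖ ≤ R ^ (d - (i:ℕ)) * ‖z‖ ^ (i : ℕ) := by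
      rw [norm_mul, norm_pow]
      exact mul_le_mul_of_nonneg_right (norm_coeff_le hd a i) (by positivity)
    have h2 : R ^ (d - (i:ℕ)) * ‖z‖ ^ (i : ℕ) ≤ R * ‖z‖ ^ (d - 1) := by
      have hsplit : d - (i:ℕ) = (d - (i:ℕ) - 1) + 1 := by omega
      rw [hsplit, pow_succ, mul_comm (R ^ (d - (i:ℕ) - 1)) R, mul_assoc]
      refine mul_le_mul_of_nonneg_left ?_ (by linarith : (0:ℝ) ≤ R)
      have h3 : R ^ (d - (i:ℕ) - 1) ≤ ‖z‖ ^ (d - (i:ℕ) - 1) :=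
        pow_le_pow_left₀ (by linarith) hz.le _
      calc R ^ (d - (i:ℕ) - 1) * ‖z‖ ^ (i:ℕ) ≤ ‖z‖ ^ (d - (i:ℕ) - 1) * ‖z‖ ^ (i:ℕ) :=
            mul_le_mul_of_nonneg_right h3 (by positivity)
        _ = ‖z‖ ^ (d - 1) := by rw [← pow_add]; congr 1; omega
    exact le_trans h1 h2
  have hsum : ‖∑ i : Fin (d - 1), a i * z ^ (i : ℕ)‖ ≤ R * ‖z‖ ^ (d - 1) := by
    refine IsUltrametricDist.norm_sum_le_of_forall_le_of_nonneg ?_ (fun i _ => hbound i)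
    positivity
  have hlt : R * ‖z‖ ^ (d - 1) < ‖z‖ ^ d := by
    have : ‖z‖ ^ d = ‖z‖ * ‖z‖ ^ (d - 1) := by
      rw [← pow_succ']; congr 1; omega
    rw [this]
    exact mul_lt_mul_of_pos_right hz (by positivity)
  have hzd : ‖z ^ d‖ = ‖z‖ ^ d := norm_pow z d
  rw [norm_add_eq_left (by rw [norm_pow]; exact lt_of_le_of_lt hsum hlt), norm_pow]

lemma iterate_norm_formula {d : ℕ} (hd : 2 ≤ d) (a : Fin (d - 1) → K) (z : K)
    (hz : baseRadius d a < ‖z‖) (n : ℕ) :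
    ‖(fun w => (MCpoly d a).eval w)^[n] z‖ = ‖z‖ ^ (d ^ n) := by
  induction n with
  | zero => simp
  | succ n ih =>
      have hz1 : (1:ℝ) ≤ ‖z‖ := le_of_lt (lt_of_le_of_lt (one_le_baseRadius a) hz)
      have hgt : baseRadius d a < ‖(fun w => (MCpoly d a).eval w)^[n] z‖ := by
        rw [ih]
        calc baseRadius d a < ‖z‖ := hz
          _ ≤ ‖z‖ ^ (d ^ n) := le_self_pow₀ (by linarith) (by positivity)
      rw [Function.iterate_succ_apply', norm_famF_eval hd a _ hgt, ih, ← pow_mul, ← pow_succ]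

lemma escapes_of_gt {d : ℕ} (hd : 2 ≤ d) (a : Fin (d - 1) → K) (z : K)
    (hz : baseRadius d a < ‖z‖) : Escapes (fun w => (MCpoly d a).eval w) z := by
  have hz1 : (1:ℝ) < ‖z‖ := lt_of_le_of_lt (one_le_baseRadius a) hz
  have h1 : Tendsto (fun m : ℕ => ‖z‖ ^ m) atTop atTop :=
    tendsto_pow_atTop_atTop_of_one_lt hz1
  have h2 : Tendsto (fun n : ℕ => d ^ n) atTop atTop :=
    tendsto_atTop_mono (fun n => (Nat.lt_pow_self (n := n) (by omega)).le) tendsto_id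
  have := h1.comp h2
  unfold Escapes
  convert this using 2 with n
  exact iterate_norm_formula hd a z hz n

lemma escapes_of_iterate_gt {d : ℕ} (hd : 2 ≤ d) (a : Fin (d - 1) → K) (z : K) (m : ℕ)
    (hz : baseRadius d a < ‖(fun w => (MCpoly d a).eval w)^[m] z‖) :
    Escapes (fun w => (MCpoly d a).eval w) z := by
  have hE := escapes_of_gt hd a _ hz
  unfold Escapes at hE ⊢
  rw [← tendsto_add_atTop_iff_nat m]
  convert hE using 2 with n
  rw [← Function.iterate_add_apply]

lemma not_escapes_of_bounded {f : K → K} {z : K} {R : ℝ}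
    (h : ∀ n, ‖f^[n] z‖ ≤ R) : ¬ Escapes f z := by
  intro hE
  obtain ⟨n, hn⟩ := (hE.eventually_gt_atTop R).exists
  exact absurd (h n) (not_le.mpr hn)

lemma norm_multiset_sum_le' (m : Multiset K) {Cb : ℝ} (h0 : 0 ≤ Cb)
    (h : ∀ x ∈ m, ‖x‖ ≤ Cb) : ‖m.sum‖ ≤ Cb := by
  induction m using Multiset.induction with
  | empty => simpa using h0
  | cons x m ih =>
      rw [Multiset.sum_cons]
      refine le_trans (IsUltrametricDist.norm_add_le_max _ _) (max_le ?_ ?_)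
      · exact h x (Multiset.mem_cons_self x m)
      · exact ih fun y hy => h y (Multiset.mem_cons_of_mem hy)

lemma norm_multiset_prod_le' (m : Multiset K) {s : ℝ}
    (h : ∀ x ∈ m, ‖x‖ ≤ s) (hs : 0 ≤ s) : ‖m.prod‖ ≤ s ^ Multiset.card m := by
  induction m using Multiset.induction with
  | empty => simp
  | cons x m ih =>
      rw [Multiset.prod_cons, Multiset.card_cons, pow_succ, norm_mul, mul_comm (s ^ _) s]
      exact mul_le_mul (h x (Multiset.mem_cons_self x m))
        (ih fun y hy => h y (Multiset.mem_cons_of_mem hy)) (norm_nonneg _)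
        (le_trans (norm_nonneg _) (h x (Multiset.mem_cons_self x m)))

lemma norm_esymm_le (m : Multiset K) {s : ℝ} (h : ∀ x ∈ m, ‖x‖ ≤ s) (hs : 0 ≤ s) (j : ℕ) :
    ‖m.esymm j‖ ≤ s ^ j := by
  unfold Multiset.esymm
  refine norm_multiset_sum_le' _ (by positivity) ?_
  intro x hx
  rw [Multiset.mem_map] at hx
  obtain ⟨t, ht, rfl⟩ := hx
  rw [Multiset.mem_powersetCard] at ht
  have : ‖t.prod‖ ≤ s ^ Multiset.card t :=
    norm_multiset_prod_le' t (fun y hy => h y (Multiset.mem_of_le ht.1 hy)) hs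
  rwa [ht.2] at this

lemma norm_prod_X_sub_C_coeff (E : Finset K) {s : ℝ} (h : ∀ x ∈ E, ‖x‖ ≤ s) (hs : 0 ≤ s)
    {k : ℕ} (hk : k ≤ E.card) :
    ‖(∏ z ∈ E, (X - C z)).coeff k‖ ≤ s ^ (E.card - k) := by
  have hprod : (∏ z ∈ E, (X - C z)) = (E.val.map fun t => X - C t).prod := rfl
  rw [hprod, Multiset.prod_X_sub_C_coeff E.val (by simpa using hk)]
  rw [norm_mul, norm_pow, norm_neg, norm_one, one_pow, one_mul]
  exact norm_esymm_le E.val (fun x hx => h x hx) hs _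

lemma norm_lagrange_basis_coeff [DecidableEq K] (T : Finset K) {s : ℝ} (hs : 0 < s)
    (hsep : ∀ y ∈ T, ∀ z ∈ T, y ≠ z → ‖y - z‖ = s)
    (hnorm : ∀ y ∈ T, ‖y‖ ≤ s)
    {y : K} (hy : y ∈ T) (k : ℕ) :
    ‖(Lagrange.basis T id y).coeff k‖ * s ^ k ≤ 1 := by
  classical
  set E := T.erase y with hE
  have hbasis : Lagrange.basis T id y =
      C (∏ z ∈ E, (y - z)⁻¹) * ∏ z ∈ E, (X - C z) := by
    rw [Lagrange.basis]
    rw [map_prod, ← Finset.prod_mul_distrib]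
    rfl
  rw [hbasis, coeff_C_mul, norm_mul, norm_prod]
  have hnormfac : ∀ z ∈ E, ‖(y - z)⁻¹‖ = s⁻¹ := by
    intro z hz
    rw [norm_inv, hsep y hy z (Finset.mem_of_mem_erase hz)
      (Ne.symm (Finset.ne_of_mem_erase hz))]
  rw [Finset.prod_congr rfl hnormfac, Finset.prod_const]
  by_cases hk : k ≤ E.card
  · have hcoeff : ‖(∏ z ∈ E, (X - C z)).coeff k‖ ≤ s ^ (E.card - k) :=
      norm_prod_X_sub_C_coeff E (fun x hx => hnorm x (Finset.mem_of_mem_erase hx)) hs.le hk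
    calc s⁻¹ ^ E.card * ‖(∏ z ∈ E, (X - C z)).coeff k‖ * s ^ k
        ≤ s⁻¹ ^ E.card * s ^ (E.card - k) * s ^ k := by
          refine mul_le_mul_of_nonneg_right (mul_le_mul_of_nonneg_left hcoeff (by positivity)) (by positivity)
      _ = 1 := by
          rw [mul_assoc, ← pow_add, show E.card - k + k = E.card from by omega,
            inv_pow, inv_mul_cancel₀ (by positivity)]
  · have hdeg : ((∏ z ∈ E, (X - C z)).coeff k) = 0 := by
      apply coeff_eq_zero_of_natDegree_lt
      calc (∏ z ∈ E, (X - C z)).natDegree ≤ E.card := by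
            refine le_trans (natDegree_prod_le _ _) ?_
            simp [natDegree_X_sub_C]
        _ < k := by omega
    rw [hdeg]
    simp

/-- Key interpolation bound: a polynomial of degree < #T which is ≤ C on a set of points
pairwise at distance s on the sphere of radius s has all Gauss-norm terms ≤ C. -/
lemma coeff_bound (T : Finset K) {s : ℝ} (hs : 0 < s)
    (hTs : ∀ y ∈ T, ‖y‖ = s)
    (hsep : ∀ y ∈ T, ∀ z ∈ T, y ≠ z → ‖y - z‖ = s)
    {p : K[X]} (hdeg : p.degree < T.card)
    {Cb : ℝ} (hC0 : 0 ≤ Cb) (hC : ∀ y ∈ T, ‖p.eval y‖ ≤ Cb) (k : ℕ) :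
    ‖p.coeff k‖ * s ^ k ≤ Cb := by
  classical
  have hinj : Set.InjOn (id : K → K) T := Function.injective_id.injOn
  have hinterp := Lagrange.eq_interpolate hinj hdeg
  have hcoeff : p.coeff k = ∑ y ∈ T, p.eval y * (Lagrange.basis T id y).coeff k := by
    conv_lhs => rw [hinterp]
    rw [Lagrange.interpolate_apply, finset_sum_coeff]
    exact Finset.sum_congr rfl fun y _ => by rw [coeff_C_mul]; rfl
  rw [hcoeff]
  have hbound : ∀ y ∈ T, ‖p.eval y * (Lagrange.basis T id y).coeff k‖ ≤ Cb * s⁻¹ ^ k := by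
    intro y hy
    rw [norm_mul]
    have h1 := norm_lagrange_basis_coeff T hs hsep (fun z hz => (hTs z hz).le) hy k
    have h2 : ‖(Lagrange.basis T id y).coeff k‖ ≤ s⁻¹ ^ k := by
      have h3 := mul_le_mul_of_nonneg_right h1 (by positivity : (0:ℝ) ≤ s⁻¹ ^ k)
      rwa [mul_assoc, ← mul_pow, mul_inv_cancel₀ hs.ne', one_pow, mul_one, one_mul] at h3
    exact mul_le_mul (hC y hy) h2 (norm_nonneg _) hC0
  have := IsUltrametricDist.norm_sum_le_of_forall_le_of_nonneg
    (by positivity : (0:ℝ) ≤ Cb * s⁻¹ ^ k) hbound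
  calc ‖∑ y ∈ T, p.eval y * (Lagrange.basis T id y).coeff k‖ * s ^ k
      ≤ (Cb * s⁻¹ ^ k) * s ^ k := mul_le_mul_of_nonneg_right this (by positivity)
    _ = Cb := by rw [mul_assoc, ← mul_pow, inv_mul_cancel₀ hs.ne', one_pow, mul_one]

lemma norm_hasSum_le {b : ℕ → K} {x : K} {S : K} {s G : ℝ}
    (hx : ‖x‖ ≤ s) (hG0 : 0 ≤ G) (hG : ∀ k, ‖b k‖ * s ^ k ≤ G)
    (hS : HasSum (fun n => b n * x ^ n) S) : ‖S‖ ≤ G := by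
  rw [← hS.tsum_eq]
  refine IsUltrametricDist.norm_tsum_le_of_forall_le_of_nonneg hG0 fun k => ?_
  rw [norm_mul, norm_pow]
  calc ‖b k‖ * ‖x‖ ^ k ≤ ‖b k‖ * s ^ k :=
        mul_le_mul_of_nonneg_left (pow_le_pow_left₀ (norm_nonneg _) hx _) (norm_nonneg _)
    _ ≤ G := hG k

/-- two points in the same open disk of radius `s` on the sphere: series values differ by
at most `G * (dist / s) < G`. -/
lemma norm_hasSum_sub_le {b : ℕ → K} {x1 x' : K} {S1 S' : K} {s G : ℝ} (hs : 0 < s)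
    (hx1 : ‖x1‖ ≤ s) (hx' : ‖x'‖ ≤ s) (hG0 : 0 ≤ G) (hG : ∀ k, ‖b k‖ * s ^ k ≤ G)
    (hS1 : HasSum (fun n => b n * x1 ^ n) S1) (hS' : HasSum (fun n => b n * x' ^ n) S') :
    ‖S' - S1‖ ≤ G * (‖x' - x1‖ / s) := by
  have hsum := hS'.sub hS1
  have heq : (fun n => b n * x' ^ n - b n * x1 ^ n) = fun n => b n * (x' ^ n - x1 ^ n) := by
    funext n; ring
  rw [heq] at hsum
  rw [← hsum.tsum_eq]
  refine IsUltrametricDist.norm_tsum_le_of_forall_le_of_nonneg (by positivity) fun k => ?_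
  match k with
  | 0 => simpa using by positivity
  | (n+1) =>
    have hfac : x' ^ (n+1) - x1 ^ (n+1) =
        (∑ i ∈ Finset.range (n+1), x' ^ i * x1 ^ (n - i)) * (x' - x1) := (geom_sum₂_mul x' x1 (n+1)).symm
    have hsumb : ‖∑ i ∈ Finset.range (n+1), x' ^ i * x1 ^ (n - i)‖ ≤ s ^ n := by
      refine IsUltrametricDist.norm_sum_le_of_forall_le_of_nonneg (by positivity) fun i hi => ?_
      rw [Finset.mem_range] at hi
      rw [norm_mul, norm_pow, norm_pow]
      calc ‖x'‖ ^ i * ‖x1‖ ^ (n - i) ≤ s ^ i * s ^ (n - i) := by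
            exact mul_le_mul (pow_le_pow_left₀ (norm_nonneg _) hx' _)
              (pow_le_pow_left₀ (norm_nonneg _) hx1 _) (by positivity) (by positivity)
        _ = s ^ n := by rw [← pow_add]; congr 1; omega
    rw [norm_mul, hfac, norm_mul]
    calc ‖b (n+1)‖ * (‖∑ i ∈ Finset.range (n+1), x' ^ i * x1 ^ (n - i)‖ * ‖x' - x1‖)
        ≤ ‖b (n+1)‖ * (s ^ n * ‖x' - x1‖) := by
          refine mul_le_mul_of_nonneg_left (mul_le_mul_of_nonneg_right hsumb (norm_nonneg _))
            (norm_nonneg _)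
      _ = (‖b (n+1)‖ * s ^ (n+1)) * (‖x' - x1‖ / s) := by
          field_simp
          ring
      _ ≤ G * (‖x' - x1‖ / s) := by
          refine mul_le_mul_of_nonneg_right (hG (n+1)) (by positivity)

/-- a nonnegative sequence tending to zero attains its maximum -/
lemma exists_max_of_tendsto_zero {t : ℕ → ℝ} (h0 : ∀ k, 0 ≤ t k)
    (h : Tendsto t atTop (nhds 0)) : ∃ k0, ∀ k, t k ≤ t k0 := by
  by_cases hall : ∀ k, t k = 0
  · exact ⟨0, fun k => by rw [hall k, hall 0]⟩
  push_neg at hall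
  obtain ⟨k1, hk1⟩ := hall
  have hk1pos : 0 < t k1 := lt_of_le_of_ne (h0 k1) (Ne.symm hk1)
  have hev : ∀ᶠ k in atTop, t k < t k1 := h.eventually_lt_const hk1pos
  obtain ⟨N, hN⟩ := hev.exists_forall_of_atTop
  obtain ⟨k0, hk0mem, hk0⟩ := Finset.exists_max_image (Finset.range (N + 1)) t
    ⟨0, Finset.mem_range.mpr (by omega)⟩
  have hk1N : k1 < N + 1 := by
    by_contra hcon
    exact absurd (hN k1 (by omega)) (lt_irrefl _)
  refine ⟨k0, fun k => ?_⟩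
  by_cases hkN : k < N + 1
  · exact hk0 k (Finset.mem_range.mpr hkN)
  · calc t k ≤ t k1 := (hN k (by omega)).le
      _ ≤ t k0 := hk0 k1 (Finset.mem_range.mpr hk1N)

end Aux

set_option maxHeartbeats 2000000 in
/-- Lemma 5.3: for a critically marked analytic family with constant base
radius over `Λ = {‖λ − λ₀‖ < r}`, for every radius `s < r` close enough to `r` and lying
in the value group, there is a maximal open disk `Λ′ = {‖λ − λ₁‖ < s}` in `Λ ∖ {λ₀}` on
which all marked critical points are passive and on which every critical point that is
active in `Λ` escapes to infinity. -/
theorem perturb_into_passive_disk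
    {K : Type*} [NontriviallyNormedField K] [IsUltrametricDist K]
    [CompleteSpace K] [IsAlgClosed K] [CharZero K]
    (hres : ∀ n : ℤ, n ≠ 0 → ‖(n : K)‖ = 1)
    (d : ℕ) (hd : 2 ≤ d) (lam0 : K) (r : ℝ) (hr : 0 < r)
    (a c : Fin (d - 1) → K → K)
    (hfam : IsMarkedFamily d lam0 r a c)
    (hbase : ∀ lam1 : K, ‖lam1 - lam0‖ < r → ∀ lam2 : K, ‖lam2 - lam0‖ < r →
      baseRadius d (fun i => a i lam1) = baseRadius d (fun i => a i lam2)) :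
    ∃ s0 : ℝ, s0 < r ∧ ∀ s : ℝ, s0 < s → s < r → (∃ x : K, x ≠ 0 ∧ ‖x‖ = s) →
      ∃ lam1 : K, ‖lam1 - lam0‖ = s ∧
        (∀ j : Fin (d - 1), PassiveOn d a (c j) lam1 s) ∧
        (∀ j : Fin (d - 1), ¬ PassiveOn d a (c j) lam0 r →
          ∀ lam' : K, ‖lam' - lam1‖ < s → Escapes (famF d a lam') (c j lam')) := by
  classical
  obtain ⟨ha, hc, -⟩ := hfam
  have hd1 : 0 < d - 1 := by omega
  haveI hFinNe : Nonempty (Fin (d - 1)) := ⟨⟨0, hd1⟩⟩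
  have hlam0 : ‖lam0 - lam0‖ < r := by simpa using hr
  set R : ℝ := baseRadius d (fun i => a i lam0) with hRdef
  have hR1 : (1 : ℝ) ≤ R := one_le_baseRadius _
  have hRconst : ∀ lam : K, ‖lam - lam0‖ < r → baseRadius d (fun i => a i lam) = R :=
    fun lam h => hbase lam h lam0 hlam0
  set g : Fin (d - 1) → ℕ → K → K := fun j n lam => (famF d a lam)^[n] (c j lam) with hgdef
  have hgser : ∀ j n, PowerSeriesOnBall (g j n) lam0 r := fun j n => gSeq_series ha (hc j) n
  have hesc : ∀ lam : K, ‖lam - lam0‖ < r → ∀ j : Fin (d - 1),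
      (Escapes (famF d a lam) (c j lam) ↔ ∃ n, R < ‖g j n lam‖) := by
    intro lam hlam j
    constructor
    · intro hE
      by_contra hcon
      push_neg at hcon
      exact not_escapes_of_bounded hcon hE
    · rintro ⟨n, hn⟩
      have hn' : baseRadius d (fun i => a i lam) <
          ‖(fun w => (MCpoly d (fun i => a i lam)).eval w)^[n] (c j lam)‖ := by
        rw [hRconst lam hlam]; exact hn
      exact escapes_of_iterate_gt hd (fun i => a i lam) (c j lam) n hn'
  set Active : Fin (d - 1) → Prop :=
    fun j => ∃ lam : K, ‖lam - lam0‖ < r ∧ ∃ n, R < ‖g j n lam‖ with hActdef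
  have hpassive_of_not : ∀ j, ¬ Active j → ∀ lam : K, ‖lam - lam0‖ < r →
      ¬ Escapes (famF d a lam) (c j lam) := by
    intro j hA lam hlam hE
    exact hA ⟨lam, hlam, (hesc lam hlam j).mp hE⟩
  have hchoice : ∀ j, ∃ (lamWj : K) (nWj : ℕ), ‖lamWj - lam0‖ < r ∧
      (Active j → R < ‖g j nWj lamWj‖) := by
    intro j
    by_cases hA : Active j
    · obtain ⟨lam, hlam, n, hn⟩ := hA
      exact ⟨lam, n, hlam, fun _ => hn⟩
    · exact ⟨lam0, 0, hlam0, fun h => absurd h hA⟩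
  choose lamW nW hWball hWgt using hchoice
  refine ⟨(Finset.univ : Finset (Fin (d - 1))).sup' Finset.univ_nonempty
    (fun j => ‖lamW j - lam0‖), (Finset.sup'_lt_iff _).mpr fun j _ => hWball j, ?_⟩
  intro s hs0s hsr hex
  obtain ⟨x, hx0, hxs⟩ := hex
  have hs : 0 < s := by rw [← hxs]; exact norm_pos_iff.mpr hx0
  have hWs : ∀ j, ‖lamW j - lam0‖ ≤ s := fun j =>
    le_of_lt (lt_of_le_of_lt (Finset.le_sup' (fun j => ‖lamW j - lam0‖)
      (Finset.mem_univ j)) hs0s)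
  have hxball : ‖(lam0 + x) - lam0‖ < r := by rwa [add_sub_cancel_left, hxs]
  -- per-index data: coefficients, cut-off, Gauss norm, attaining index
  have hdata : ∀ j : Fin (d - 1), ∃ (bj : ℕ → K) (Nj : ℕ) (Gj : ℝ) (kj : ℕ),
      (∀ lam : K, ‖lam - lam0‖ < r →
        HasSum (fun n => bj n * (lam - lam0) ^ n) (g j (nW j) lam)) ∧
      Tendsto (fun k => ‖bj k‖ * s ^ k) atTop (nhds 0) ∧ 1 ≤ Nj ∧
      (Active j → R < Gj ∧ (∀ k, ‖bj k‖ * s ^ k ≤ Gj) ∧ ‖bj kj‖ * s ^ kj = Gj ∧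
        (∀ k, Nj ≤ k → ‖bj k‖ * s ^ k < Gj) ∧ kj < Nj) := by
    intro j
    obtain ⟨bj, hbj⟩ := hgser j (nW j)
    have htd : Tendsto (fun k => ‖bj k‖ * s ^ k) atTop (nhds 0) := by
      have hsm : Summable (fun n => bj n * x ^ n) :=
        ⟨_, by simpa [add_sub_cancel_left] using hbj (lam0 + x) hxball⟩
      have h2 := hsm.tendsto_atTop_zero.norm
      rw [norm_zero] at h2
      convert h2 using 2 with k
      rw [norm_mul, norm_pow, hxs]
    by_cases hA : Active j
    · have h0 : ∀ k, 0 ≤ ‖bj k‖ * s ^ k := fun k => by positivity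
      obtain ⟨k0, hk0⟩ := exists_max_of_tendsto_zero h0 htd
      have hGR : R < ‖bj k0‖ * s ^ k0 := by
        refine lt_of_lt_of_le (hWgt j hA) ?_
        exact norm_hasSum_le (hWs j) (h0 k0) hk0 (hbj (lamW j) (hWball j))
      have hGpos : (0:ℝ) < ‖bj k0‖ * s ^ k0 := lt_of_lt_of_le (by linarith) hGR.le
      obtain ⟨N', hN'⟩ := (htd.eventually_lt_const hGpos).exists_forall_of_atTop
      exact ⟨bj, max N' (k0 + 1), ‖bj k0‖ * s ^ k0, k0, hbj, htd, by omega, fun _ =>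
        ⟨hGR, hk0, rfl, fun k hk => hN' k (by omega), by omega⟩⟩
    · exact ⟨bj, 1, 0, 0, hbj, htd, le_refl 1, fun h => absurd h hA⟩
  choose b N G kG hHS htd hN1 hAct using hdata
  set M : ℕ := ∑ j : Fin (d - 1), N j with hM
  -- the candidate points
  set y : ℕ → K := fun m => ((m + 1 : ℕ) : K) * x with hy
  have hynorm : ∀ m, ‖y m‖ = s := by
    intro m
    have h1 : ((m + 1 : ℕ) : K) = (((m : ℤ) + 1 : ℤ) : K) := by push_cast; ring
    show ‖((m + 1 : ℕ) : K) * x‖ = s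
    rw [norm_mul, h1, hres ((m : ℤ) + 1) (by omega), one_mul, hxs]
  have hysub : ∀ m m' : ℕ, y m - y m' = (((m : ℤ) - (m' : ℤ) : ℤ) : K) * x := by
    intro m m'
    show ((m + 1 : ℕ) : K) * x - ((m' + 1 : ℕ) : K) * x = _
    push_cast
    ring
  have hysep : ∀ m m' : ℕ, m ≠ m' → ‖y m - y m'‖ = s := by
    intro m m' hmm
    rw [hysub, norm_mul, hres _ (sub_ne_zero.mpr (by exact_mod_cast hmm)), one_mul, hxs]
  have hyinj : Function.Injective y := by
    intro m m' hEq
    by_contra hne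
    have h1 := hysep m m' hne
    rw [hEq, sub_self, norm_zero] at h1
    exact absurd h1.symm (ne_of_gt hs)
  have hyball : ∀ m : ℕ, ‖(lam0 + y m) - lam0‖ < r := by
    intro m; rw [add_sub_cancel_left, hynorm]; exact hsr
  set Bad : Fin (d - 1) → Finset ℕ := fun j =>
    if Active j then (Finset.range M).filter (fun m => ‖g j (nW j) (lam0 + y m)‖ < G j)
    else ∅ with hBad
  have cardBad : ∀ j, (Bad j).card < N j := by
    intro j
    by_cases hA : Active j
    · simp only [hBad, if_pos hA]
      by_contra hcon
      push_neg at hcon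
      obtain ⟨hGR, hGub, hkGeq, hkGtail, hkGN⟩ := hAct j hA
      obtain ⟨S, hSsub, hScard⟩ := Finset.exists_subset_card_eq hcon
      have hSne : S.Nonempty := by
        rw [← Finset.card_pos, hScard]; exact hN1 j
      set T : Finset K := S.image y with hT
      have hTcard : T.card = N j := by
        rw [hT, Finset.card_image_of_injective _ hyinj, hScard]
      set p : Polynomial K := ∑ k ∈ Finset.range (N j), Polynomial.C (b j k) * X ^ k with hp
      have hdeg : p.degree < (T.card : ℕ) := by
        rw [hTcard]
        refine lt_of_le_of_lt (Polynomial.degree_sum_le _ _) ?_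
        rw [Finset.sup_lt_iff (by exact_mod_cast WithBot.bot_lt_coe (N j))]
        intro k hk
        refine lt_of_le_of_lt (Polynomial.degree_C_mul_X_pow_le _ _) ?_
        exact_mod_cast Finset.mem_range.mp hk
      have hpcoeff : p.coeff (kG j) = b j (kG j) := by
        rw [hp, Polynomial.finset_sum_coeff]
        simp only [Polynomial.coeff_C_mul, Polynomial.coeff_X_pow]
        rw [Finset.sum_eq_single (kG j)]
        · simp
        · intro i hi hik
          simp [Ne.symm hik]
        · intro hk'
          exact absurd (Finset.mem_range.mpr hkGN) hk'
      have hpeval : ∀ m : ℕ, p.eval (y m) = ∑ k ∈ Finset.range (N j), b j k * (y m) ^ k := by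
        intro m
        rw [hp, Polynomial.eval_finset_sum]
        simp
      have htd' : Tendsto (fun k => ‖b j (k + N j)‖ * s ^ (k + N j)) atTop (nhds 0) :=
        (htd j).comp (tendsto_add_atTop_nat (N j))
      obtain ⟨ktl, hktl⟩ := exists_max_of_tendsto_zero (fun k => by positivity) htd'
      have hGtl : ‖b j (ktl + N j)‖ * s ^ (ktl + N j) < G j := hkGtail _ (by omega)
      have heval : ∀ m ∈ S, ‖p.eval (y m)‖ < G j := by
        intro m hm
        have hmbad := hSsub hm
        rw [Finset.mem_filter] at hmbad
        have hbadval := hmbad.2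
        have hHSm : HasSum (fun n => b j n * (y m) ^ n) (g j (nW j) (lam0 + y m)) := by
          simpa [add_sub_cancel_left] using hHS j (lam0 + y m) (hyball m)
        have htailsum : HasSum (fun n => b j (n + N j) * (y m) ^ (n + N j))
            (g j (nW j) (lam0 + y m) - ∑ k ∈ Finset.range (N j), b j k * (y m) ^ k) := by
          refine (hasSum_nat_add_iff (f := fun n => b j n * (y m) ^ n) (N j)).mpr ?_
          rwa [sub_add_cancel]
        have htailbound : ‖g j (nW j) (lam0 + y m) -
            ∑ k ∈ Finset.range (N j), b j k * (y m) ^ k‖ ≤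
            ‖b j (ktl + N j)‖ * s ^ (ktl + N j) := by
          rw [← htailsum.tsum_eq]
          refine IsUltrametricDist.norm_tsum_le_of_forall_le_of_nonneg (by positivity)
            fun n => ?_
          rw [norm_mul, norm_pow, hynorm]
          exact hktl n
        rw [hpeval m]
        have hPrw : ∑ k ∈ Finset.range (N j), b j k * (y m) ^ k =
            g j (nW j) (lam0 + y m) + -(g j (nW j) (lam0 + y m) -
              ∑ k ∈ Finset.range (N j), b j k * (y m) ^ k) := by ring
        rw [hPrw]
        refine lt_of_le_of_lt (IsUltrametricDist.norm_add_le_max _ _) (max_lt hbadval ?_)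
        rw [norm_neg]
        exact lt_of_le_of_lt htailbound hGtl
      have hTne : T.Nonempty := hSne.image y
      have hCbub : ∀ yv ∈ T, ‖p.eval yv‖ ≤ T.sup' hTne (fun yv => ‖p.eval yv‖) :=
        fun yv hyv => Finset.le_sup' (fun yv => ‖p.eval yv‖) hyv
      have hCblt : T.sup' hTne (fun yv => ‖p.eval yv‖) < G j := by
        rw [Finset.sup'_lt_iff]
        intro yv hyv
        obtain ⟨m, hm, rfl⟩ := Finset.mem_image.mp hyv
        exact heval m hm
      have hCb0 : 0 ≤ T.sup' hTne (fun yv => ‖p.eval yv‖) := by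
        obtain ⟨yv0, hyv0⟩ := hTne
        exact le_trans (norm_nonneg (p.eval yv0)) (Finset.le_sup' (fun yv => ‖p.eval yv‖) hyv0)
      have hTs : ∀ yv ∈ T, ‖yv‖ = s := by
        intro yv hyv
        obtain ⟨m, _, rfl⟩ := Finset.mem_image.mp hyv
        exact hynorm m
      have hTsep : ∀ y1 ∈ T, ∀ y2 ∈ T, y1 ≠ y2 → ‖y1 - y2‖ = s := by
        intro y1 h1 y2 h2 hne
        obtain ⟨m1, _, rfl⟩ := Finset.mem_image.mp h1
        obtain ⟨m2, _, rfl⟩ := Finset.mem_image.mp h2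
        exact hysep m1 m2 (fun h => hne (by rw [h]))
      have hfinal := coeff_bound T hs hTs hTsep hdeg hCb0 hCbub (kG j)
      rw [hpcoeff, hkGeq] at hfinal
      exact absurd (lt_of_le_of_lt hfinal hCblt) (lt_irrefl _)
    · simp only [hBad, if_neg hA, Finset.card_empty]
      exact lt_of_lt_of_le one_pos (hN1 j)
  -- there is a good candidate point
  have hexists : ∃ m ∈ Finset.range M, ∀ j, m ∉ Bad j := by
    by_contra hcon
    push_neg at hcon
    have hsub : Finset.range M ⊆ Finset.univ.biUnion Bad := by
      intro m hm
      obtain ⟨j, hj⟩ := hcon m hm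
      exact Finset.mem_biUnion.mpr ⟨j, Finset.mem_univ j, hj⟩
    have h1 : M ≤ (Finset.univ.biUnion Bad).card := by
      calc M = (Finset.range M).card := (Finset.card_range M).symm
        _ ≤ _ := Finset.card_le_card hsub
    have h2 : (Finset.univ.biUnion Bad).card ≤ ∑ j, (Bad j).card := Finset.card_biUnion_le
    have h3 : ∑ j, (Bad j).card < ∑ j, N j :=
      Finset.sum_lt_sum_of_nonempty Finset.univ_nonempty (fun j _ => cardBad j)
    rw [← hM] at h3
    omega
  obtain ⟨m, hmM, hmgood⟩ := hexists
  have hlam1s : ‖(lam0 + y m) - lam0‖ = s := by rw [add_sub_cancel_left, hynorm]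
  have hsub' : ∀ lam' : K, ‖lam' - (lam0 + y m)‖ < s → ‖lam' - lam0‖ < r := by
    intro lam' h
    have hsplit : lam' - lam0 = (lam' - (lam0 + y m)) + ((lam0 + y m) - lam0) := by ring
    rw [hsplit]
    refine lt_of_le_of_lt (IsUltrametricDist.norm_add_le_max _ _) ?_
    rw [hlam1s]
    exact max_lt (lt_trans h hsr) hsr
  have hescape : ∀ j, Active j → ∀ lam' : K, ‖lam' - (lam0 + y m)‖ < s →
      Escapes (famF d a lam') (c j lam') := by
    intro j hA lam' hlam'
    obtain ⟨hGR, hGub, hkGeq, hkGtail, hkGN⟩ := hAct j hA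
    have hmgoodj : G j ≤ ‖g j (nW j) (lam0 + y m)‖ := by
      have hng := hmgood j
      rw [hBad] at hng
      simp only [if_pos hA] at hng
      by_contra hlt
      push_neg at hlt
      exact hng (Finset.mem_filter.mpr ⟨hmM, hlt⟩)
    have hG0 : (0:ℝ) ≤ G j := le_trans (by linarith) hGR.le
    have hGpos : (0:ℝ) < G j := lt_of_le_of_lt (by linarith) hGR
    have hx1 : ‖(lam0 + y m) - lam0‖ ≤ s := le_of_eq hlam1s
    have hx2 : ‖lam' - lam0‖ ≤ s := by
      have hsplit : lam' - lam0 = (lam' - (lam0 + y m)) + ((lam0 + y m) - lam0) := by ring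
      rw [hsplit]
      refine le_trans (IsUltrametricDist.norm_add_le_max _ _) ?_
      rw [hlam1s]
      exact max_le (le_of_lt hlam') le_rfl
    have hdiff : ‖g j (nW j) lam' - g j (nW j) (lam0 + y m)‖ ≤
        G j * (‖lam' - (lam0 + y m)‖ / s) := by
      have h1 := hHS j (lam0 + y m) (by rw [hlam1s]; exact hsr)
      have h2 := hHS j lam' (hsub' lam' hlam')
      have h3 := norm_hasSum_sub_le hs hx1 hx2 hG0 hGub h1 h2
      have hxx : (lam' - lam0) - ((lam0 + y m) - lam0) = lam' - (lam0 + y m) := by ring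
      rwa [hxx] at h3
    have hdlt : G j * (‖lam' - (lam0 + y m)‖ / s) < G j := by
      have : ‖lam' - (lam0 + y m)‖ / s < 1 := (div_lt_one hs).mpr hlam'
      calc G j * (‖lam' - (lam0 + y m)‖ / s) < G j * 1 :=
            mul_lt_mul_of_pos_left this hGpos
        _ = G j := mul_one _
    have hval : ‖g j (nW j) lam'‖ = ‖g j (nW j) (lam0 + y m)‖ := by
      have hsplit : g j (nW j) lam' = g j (nW j) (lam0 + y m) +
          (g j (nW j) lam' - g j (nW j) (lam0 + y m)) := by ring
      rw [hsplit, norm_add_eq_left]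
      exact lt_of_le_of_lt hdiff (lt_of_lt_of_le hdlt hmgoodj)
    refine (hesc lam' (hsub' lam' hlam') j).mpr ⟨nW j, ?_⟩
    rw [hval]
    exact lt_of_lt_of_le hGR hmgoodj
  refine ⟨lam0 + y m, hlam1s, ?_, ?_⟩
  · intro j
    by_cases hA : Active j
    · exact Or.inl (fun lam hlam => hescape j hA lam hlam)
    · exact Or.inr (fun lam hlam => hpassive_of_not j hA lam (hsub' lam hlam))
  · intro j hnp lam' hlam'
    by_cases hA : Active j
    · exact hescape j hA lam' hlam'
    · exact absurd (Or.inr (hpassive_of_not j hA)) hnp
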